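/- For M = I - 𝟙e₁ᵀ ∈ ℝ^{n×n}, one has M Mᵀ = diag(0, S) up to block structure with S = I_{n-1} + 𝟙_{n-1}𝟙_{n-1}ᵀ, the spectral radius of S equals n, and consequently ‖M‖₂ = √n. -/

import Mathlib

open Matrix BigOperators

/-- spectral norm: supremum of the Euclidean norm of `M x` over the Euclidean unit ball -/
noncomputable def specNorm {n : ℕ} (M : Matrix (Fin n) (Fin n) ℝ) : ℝ :=
  sSup { r | ∃ x : Fin n → ℝ, (∑ i, (x i) ^ 2) ≤ 1 ∧
    r = Real.sqrt (∑ i, (M.mulVec x i) ^ 2) }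

/-- M = I - 𝟙e₁ᵀ, of size (n+2) × (n+2) -/
def M14 (n : ℕ) : Matrix (Fin (n + 2)) (Fin (n + 2)) ℝ :=
  1 - Matrix.vecMulVec (fun _ => 1) (fun j => if j = 0 then 1 else 0)

/-- S = I + 𝟙𝟙ᵀ, of size (n+1) × (n+1) -/
def S14 (n : ℕ) : Matrix (Fin (n + 1)) (Fin (n + 1)) ℝ :=
  1 + Matrix.vecMulVec (fun _ => 1) (fun _ => 1)

lemma mulVec14 (n : ℕ) (x : Fin (n+2) → ℝ) (i : Fin (n+2)) :
    (M14 n).mulVec x i = x i - x 0 := by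
  simp only [M14, mulVec, dotProduct, Matrix.sub_apply, one_apply, vecMulVec_apply, one_mul,
    sub_mul, ite_mul, one_mul, zero_mul]
  rw [Finset.sum_sub_distrib, Finset.sum_ite_eq, Finset.sum_ite_eq']
  simp

lemma ub14 (n : ℕ) (x : Fin (n+2) → ℝ) :
    ∑ i, (x i - x 0)^2 ≤ (n+2) * ∑ i, (x i)^2 := by
  rw [Fin.sum_univ_succ, Fin.sum_univ_succ (fun i => (x i)^2)]
  set y : Fin (n+1) → ℝ := fun i => x i.succ with hy
  set c := x 0
  have hcs : (∑ i, y i)^2 ≤ (n+1) * ∑ i, (y i)^2 := by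
    have := Finset.sum_mul_sq_le_sq_mul_sq Finset.univ y (fun _ => 1)
    simpa [Finset.card_univ, mul_comm] using this
  have expand : ∑ i, (y i - c)^2 = ∑ i, (y i)^2 - 2*c*(∑ i, y i) + (n+1)*c^2 := by
    have h : ∀ i : Fin (n+1), (y i - c)^2 = (y i)^2 - 2*c*(y i) + c^2 := fun i => by ring
    rw [Finset.sum_congr rfl (fun i _ => h i), Finset.sum_add_distrib,
      Finset.sum_sub_distrib, ← Finset.mul_sum, Finset.sum_const, Finset.card_univ,
      Fintype.card_fin, nsmul_eq_mul]
    push_cast; ring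
  have key : ∑ i, (y i - c)^2 ≤ (n+2) * (c^2 + ∑ i, (y i)^2) := by
    rw [expand]
    nlinarith [sq_nonneg (c + ∑ i, y i), hcs, sq_nonneg c]
  have h0 : (c - c)^2 = 0 := by ring
  rw [h0, zero_add]
  exact key

lemma spec14 (n : ℕ) : specNorm (M14 n) = Real.sqrt (n + 2) := by
  have hn2 : (0:ℝ) < n + 2 := by positivity
  have hn1 : (0:ℝ) < n + 1 := by positivity
  apply IsGreatest.csSup_eq
  constructor
  · -- membership
    set t : ℝ := Real.sqrt ((n+1)/(n+2)) with ht
    have ht2 : t^2 = (n+1)/(n+2) := Real.sq_sqrt (by positivity)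
    refine ⟨fun i => if i = 0 then -t else t/(n+1), ?_, ?_⟩
    · rw [Fin.sum_univ_succ]
      simp only [if_pos rfl, Fin.succ_ne_zero, if_neg, ite_false]
      rw [Finset.sum_const, Finset.card_univ, Fintype.card_fin, nsmul_eq_mul]
      have : (-t)^2 + (n+1) * (t/(n+1))^2 = 1 := by
        field_simp
        rw [ht2]
        field_simp
        ring
      push_cast
      linarith [this]
    · congr 1
      have hmv : ∀ i, (M14 n).mulVec (fun i => if i = 0 then -t else t/(n+1)) i
          = if i = 0 then 0 else t/(n+1) + t := by
        intro i
        rw [mulVec14]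
        by_cases h : i = 0 <;> simp [h] <;> ring
      rw [Finset.sum_congr rfl (fun i _ => by rw [hmv i])]
      rw [Fin.sum_univ_succ]
      simp only [if_pos rfl, Fin.succ_ne_zero, ite_false]
      rw [Finset.sum_const, Finset.card_univ, Fintype.card_fin, nsmul_eq_mul]
      have : (n+1:ℝ) * (t/(n+1) + t)^2 = n + 2 := by
        have : (t/(n+1) + t)^2 = t^2 * ((n+2)/(n+1))^2 := by field_simp; ring
        rw [this, ht2]
        field_simp
      push_cast
      simpa using this.symm
  · -- upper bound
    rintro r ⟨x, hx, rfl⟩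
    have h1 : ∑ i, ((M14 n).mulVec x i)^2 ≤ n + 2 := by
      have := ub14 n x
      rw [Finset.sum_congr rfl (fun i _ => by rw [mulVec14 n x i])]
      nlinarith [this, hx]
    calc Real.sqrt (∑ i, ((M14 n).mulVec x i)^2) ≤ Real.sqrt (n+2) :=
      Real.sqrt_le_sqrt h1

theorem stmt14 (n : ℕ) :
    (∀ i j, (M14 n * (M14 n)ᵀ) i j =
      if i = 0 ∨ j = 0 then 0 else if i = j then 2 else 1) ∧
    ((n + 2 : ℝ) ∈ spectrum ℝ (S14 n)) ∧
    (∀ μ ∈ spectrum ℝ (S14 n), |μ| ≤ (n + 2 : ℝ)) ∧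
    specNorm (M14 n) = Real.sqrt (n + 2) := by
  refine ⟨?_, ?_, ?_, spec14 n⟩
  · intro i j
    rw [mul_apply]
    have h : ∀ k, M14 n i k * (M14 n)ᵀ k j =
        ((if i = k then (1:ℝ) else 0) * (if j = k then 1 else 0)
          - (if i = k then 1 else 0) * (if k = 0 then 1 else 0))
          - ((if j = k then 1 else 0) * (if k = 0 then 1 else 0) - (if k = 0 then 1 else 0)) := by
      intro k
      simp [M14, one_apply, vecMulVec_apply]
      split_ifs <;> ring
    rw [Finset.sum_congr rfl (fun k _ => h k)]
    rw [Finset.sum_sub_distrib, Finset.sum_sub_distrib, Finset.sum_sub_distrib]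
    simp [Finset.sum_ite_eq, mul_ite, ite_and]
    split_ifs <;> simp_all <;> ring
  · rw [spectrum.mem_iff]
    intro hU
    have hA : (algebraMap ℝ (Matrix (Fin (n+1)) (Fin (n+1)) ℝ) (n+2) - S14 n).mulVec
        (fun _ => 1) = 0 := by
      funext i
      simp only [mulVec, dotProduct, mul_one, Matrix.sub_apply, Matrix.algebraMap_matrix_apply,
        S14, Matrix.add_apply, one_apply, vecMulVec_apply, one_mul, Pi.zero_apply]
      rw [Finset.sum_sub_distrib, Finset.sum_add_distrib, Finset.sum_ite_eq, Finset.sum_ite_eq]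
      simp [Finset.card_univ]
      ring
    obtain ⟨B, hB⟩ := hU.exists_left_inv
    have := congrArg (fun A => A.mulVec (fun _ => (1:ℝ))) hB
    simp only [← Matrix.mulVec_mulVec, hA, Matrix.mulVec_zero, Matrix.one_mulVec] at this
    have := congrFun this 0
    simp at this
  · intro μ hμ
    rw [spectrum.mem_iff, Matrix.isUnit_iff_isUnit_det, isUnit_iff_ne_zero, not_not] at hμ
    obtain ⟨v, hv0, hv⟩ := (Matrix.exists_mulVec_eq_zero_iff).2 hμ
    set s : ℝ := ∑ i, v i with hs
    have key : ∀ i, μ * v i - (v i + s) = 0 := by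
      intro i
      have h2 := congrFun hv i
      simp only [mulVec, dotProduct, Matrix.sub_apply, Matrix.algebraMap_matrix_apply, S14,
        Matrix.add_apply, one_apply, vecMulVec_apply, one_mul, sub_mul, add_mul, ite_mul,
        zero_mul, Pi.zero_apply] at h2
      rw [Finset.sum_sub_distrib, Finset.sum_add_distrib, Finset.sum_ite_eq,
        Finset.sum_ite_eq] at h2
      simpa [hs] using h2
    have hsum : μ * s = (n + 2) * s := by
      have h3 : ∑ i, (μ * v i - (v i + s)) = 0 := by simp [key]
      rw [Finset.sum_sub_distrib, Finset.sum_add_distrib, ← Finset.mul_sum,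
        Finset.sum_const] at h3
      simp only [← hs, Finset.card_univ, Fintype.card_fin, nsmul_eq_mul] at h3
      push_cast at h3
      linarith
    have hn : (0:ℝ) ≤ n := Nat.cast_nonneg n
    by_cases hszero : s = 0
    · obtain ⟨i, hi⟩ := Function.ne_iff.1 hv0
      have h4 := key i
      rw [hszero] at h4
      have hμ1 : μ = 1 := by
        have h5 : (μ - 1) * v i = 0 := by linarith
        rcases mul_eq_zero.1 h5 with h | h
        · linarith
        · exact absurd h (by simpa using hi)
      rw [hμ1, abs_one]; linarith
    · have : μ = n + 2 := by
        have := mul_right_cancel₀ hszero hsum; linarith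
      rw [this, abs_of_nonneg (by positivity)]
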